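/- arXiv:2502.17042 — 2 statements merged into one kernel-verified Lean document; each statement's English description precedes it below -/
import Mathlib

section
/- Let X and U be nonempty sets, let f : X → U → X define the discrete-time system x(k+1) = f(x(k), u(k)), and suppose the system is T_d-controllable for some positive integer T_d. Let Z̃ be a nonempty compact subset of the metric space X × U and let D_I = {z̃_1, …, z̃_M} ⊆ X × U be M anchor points whose fill distance with respect to Z̃ is at most ε > 0. Let κ be a strictly positive definite kernel on X × U, fix an initial state x₀ ∈ X, and fix N ≥ M·(T_d + 1). For each input sequence u : {0,…,N−1} → U let S(u) denote the (finite) set of joint points {(x(j), u(j)) : 0 ≤ j ≤ N−1} of the resulting trajectory with x(0) = x₀, and let V(S(u)) = (1/M)·Σ_{i=1}^{M} Var(z̃_i ; S(u)) be the average GP posterior variance at the anchor points. Then: for any input sequence u* minimizing V(S(u)) over all input sequences u : {0,…,N−1} → U, every anchor point z̃_i belongs to S(u*), and consequently the fill distance of S(u*) with respect to Z̃ is at most ε. -/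
open Matrix
open scoped Classical

/-- A strictly positive definite kernel: every Gram matrix built from pairwise-distinct
points is positive definite. -/
def IsStrictlyPDKernel {Z : Type*} (κ : Z → Z → ℝ) : Prop :=
  ∀ (n : ℕ) (z : Fin n → Z), Function.Injective z →
    (Matrix.of fun i j => κ (z i) (z j)).PosDef

/-- GP posterior variance at a query point `zq`, given the (pairwise-distinct) data points
in the finite set `S`: `κ(z̃,z̃) − k K⁻¹ kᵀ` with `K` the Gram matrix of `S` and `k` the
vector of kernel evaluations between `zq` and the points of `S`. -/
noncomputable def postVar {Z : Type*} (κ : Z → Z → ℝ) (S : Finset Z) (zq : Z) : ℝ :=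
  κ zq zq -
    (fun i : S => κ zq (i : Z)) ⬝ᵥ
      ((Matrix.of fun i j : S => κ (i : Z) (j : Z))⁻¹ *ᵥ fun i : S => κ zq (i : Z))

/-- Fill distance of a finite set `D` with respect to the region of interest `Zt`:
`ρ(D) = sup_{ς ∈ Zt} min_{z ∈ D} dist(ς, z)`. -/
noncomputable def fillDist {Z : Type*} [MetricSpace Z] (Zt : Set Z) (D : Finset Z) : ℝ :=
  ⨆ ς : Zt, ⨅ z : D, dist (ς : Z) (z : Z)

/-- Trajectory of the discrete-time system `x(k+1) = f(x(k), u(k))` starting at `x0`. -/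
def traj {X U : Type*} (f : X → U → X) (x0 : X) (u : ℕ → U) : ℕ → X
  | 0 => x0
  | k + 1 => f (traj f x0 u k) (u k)

/-- `Td`-controllability: any state can be driven to any other state in at most `Td`
(and at least one) steps by a suitable input sequence. -/
def Controllable {X U : Type*} (f : X → U → X) (Td : ℕ) : Prop :=
  ∀ x1 x2 : X, ∃ T : ℕ, 1 ≤ T ∧ T ≤ Td ∧ ∃ u : ℕ → U, traj f x1 u T = x2

/-- Generated dataset: the set of joint input-state points `{(x(j), u(j)) : 0 ≤ j ≤ N−1}`
of the trajectory with `x(0) = x0`. -/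
noncomputable def dataset {X U : Type*} (f : X → U → X) (x0 : X) (u : ℕ → U) (N : ℕ) :
    Finset (X × U) :=
  Finset.image (fun j => (traj f x0 u j, u j)) (Finset.range N)

/-! ### Auxiliary lemmas about strictly positive definite kernels -/

lemma kernel_symm {Z : Type*} {κ : Z → Z → ℝ} (hκ : IsStrictlyPDKernel κ)
    (a b : Z) : κ a b = κ b a := by
  rcases eq_or_ne a b with rfl | hab
  · rfl
  · have hinj : Function.Injective (![a, b] : Fin 2 → Z) := by
      intro i j hij
      fin_cases i <;> fin_cases j <;> simp_all
    have h := (hκ 2 ![a, b] hinj).1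
    have := h.apply 0 1
    simpa using this.symm

lemma gram_posDef {Z : Type*} {κ : Z → Z → ℝ} (hκ : IsStrictlyPDKernel κ)
    {ι : Type*} [Fintype ι] (z : ι → Z) (hz : Function.Injective z) :
    (Matrix.of fun i j => κ (z i) (z j)).PosDef := by
  let e := Fintype.equivFin ι
  have h := hκ _ (z ∘ e.symm) (hz.comp e.symm.injective)
  have heq : (Matrix.of fun i j => κ (z i) (z j))
      = (Matrix.of fun i j => κ ((z ∘ e.symm) i) ((z ∘ e.symm) j)).submatrix e e := by
    ext i j; simp
  rw [heq]
  refine Matrix.PosDef.of_dotProduct_mulVec_pos (h.1.submatrix e) fun x hx => ?_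
  have hx' : x ∘ e.symm ≠ 0 := by
    intro h0
    apply hx
    funext i
    simpa using congrFun h0 (e i)
  have hpos := h.dotProduct_mulVec_pos hx'
  rw [Matrix.submatrix_mulVec_equiv]
  convert hpos using 1
  simp only [dotProduct, star_trivial, Function.comp_apply]
  exact Fintype.sum_equiv e _ _ (fun i => by simp)

lemma postVar_eq_zero_of_mem {Z : Type*} {κ : Z → Z → ℝ} (hκ : IsStrictlyPDKernel κ)
    {S : Finset Z} {zq : Z} (h : zq ∈ S) : postVar κ S zq = 0 := by
  classical
  set K : Matrix S S ℝ := Matrix.of fun i j : S => κ (i : Z) (j : Z) with hKdef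
  have hK : K.PosDef := gram_posDef hκ _ Subtype.coe_injective
  have hdet : IsUnit K.det := hK.det_pos.ne'.isUnit
  set i0 : S := (⟨zq, h⟩ : S) with hi0
  have hk : (fun i : S => κ zq (i : Z)) = K *ᵥ Pi.single i0 1 := by
    funext i
    rw [Matrix.mulVec_single]
    simp [hKdef, hi0, kernel_symm hκ]
  rw [postVar, hk, Matrix.mulVec_mulVec, Matrix.nonsing_inv_mul _ hdet, Matrix.one_mulVec,
    dotProduct_single, Matrix.mulVec_single]
  simp [hKdef, hi0]

lemma postVar_pos_of_not_mem {Z : Type*} {κ : Z → Z → ℝ} (hκ : IsStrictlyPDKernel κ)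
    {S : Finset Z} {zq : Z} (h : zq ∉ S) : 0 < postVar κ S zq := by
  classical
  set K : Matrix S S ℝ := Matrix.of fun i j : S => κ (i : Z) (j : Z) with hKdef
  have hK : K.PosDef := gram_posDef hκ _ Subtype.coe_injective
  have hdet : IsUnit K.det := hK.det_pos.ne'.isUnit
  set k : S → ℝ := fun i => κ zq (i : Z) with hkdef
  set α : S → ℝ := K⁻¹ *ᵥ k with hα
  set p : Option S → Z := fun o => o.elim zq (fun i => (i : Z)) with hp
  have hpinj : Function.Injective p := by
    rintro (_ | i) (_ | j) hij <;> simp only [hp, Option.elim] at hij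
    · rfl
    · exact absurd j.2 (by rw [← hij]; exact h)
    · exact absurd i.2 (by rw [hij]; exact h)
    · exact congrArg some (Subtype.ext hij)
  set G : Matrix (Option S) (Option S) ℝ := Matrix.of fun i j => κ (p i) (p j) with hG
  have hGpd : G.PosDef := gram_posDef hκ p hpinj
  set x : Option S → ℝ := fun o => o.elim 1 (fun i => -α i) with hx
  have hx0 : x ≠ 0 := by
    intro h0
    simpa [hx] using congrFun h0 none
  have hKα : K *ᵥ α = k := by
    rw [hα, Matrix.mulVec_mulVec, Matrix.mul_nonsing_inv _ hdet, Matrix.one_mulVec]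
  have hGnone : (G *ᵥ x) none = κ zq zq - k ⬝ᵥ α := by
    simp only [Matrix.mulVec, dotProduct, Fintype.sum_option, hG, hx, hp, Matrix.of_apply,
      Option.elim, mul_one, mul_neg]
    rw [Finset.sum_neg_distrib, ← sub_eq_add_neg]
    try rfl
  have hGsome : ∀ i : S, (G *ᵥ x) (some i) = 0 := by
    intro i
    have hKi : ∑ j : S, K i j * α j = k i := congrFun hKα i
    simp only [Matrix.mulVec, dotProduct, Fintype.sum_option, hG, hx, hp, Matrix.of_apply,
      Option.elim, mul_one, mul_neg]
    have h2 : ∑ j : S, -(κ (i : Z) (j : Z) * α j) = -(k i) := by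
      rw [Finset.sum_neg_distrib, ← hKi]; simp [hKdef]
    rw [h2, kernel_symm hκ (i : Z) zq]
    simp [hkdef]
  have hquad := hGpd.dotProduct_mulVec_pos hx0
  have hcalc : star x ⬝ᵥ (G *ᵥ x) = postVar κ S zq := by
    simp only [star_trivial, dotProduct, Fintype.sum_option]
    rw [hGnone]
    have : ∀ i : S, x (some i) * (G *ᵥ x) (some i) = 0 := fun i => by rw [hGsome i, mul_zero]
    rw [Finset.sum_congr rfl (fun i _ => this i)]
    simp [hx, postVar, hkdef, hα, hKdef]
  rw [hcalc] at hquad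
  exact hquad

/-! ### Auxiliary lemmas about trajectories -/

lemma traj_congr {X U : Type*} (f : X → U → X) (x0 : X) {u v : ℕ → U} :
    ∀ {n : ℕ}, (∀ k < n, u k = v k) → traj f x0 u n = traj f x0 v n := by
  intro n
  induction n with
  | zero => intro _; rfl
  | succ n ih =>
    intro h
    show f (traj f x0 u n) (u n) = f (traj f x0 v n) (v n)
    rw [ih (fun k hk => h k (Nat.lt_succ_of_lt hk)), h n (Nat.lt_succ_self n)]

lemma traj_add {X U : Type*} (f : X → U → X) (x0 : X) (u : ℕ → U) (t : ℕ) :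
    ∀ k : ℕ, traj f x0 u (t + k) = traj f (traj f x0 u t) (fun j => u (t + j)) k := by
  intro k
  induction k with
  | zero => rfl
  | succ k ih =>
    show traj f x0 u (t + k + 1) = _
    show f (traj f x0 u (t + k)) (u (t + k)) = f (traj f (traj f x0 u t) _ k) _
    rw [ih]

/-- Existence of an input sequence visiting a list of target points. -/
lemma exists_visiting {X U : Type*} [Nonempty U] (f : X → U → X) (Td : ℕ)
    (hctrl : Controllable f Td) (x0 : X) (a : ℕ → X × U) :
    ∀ m : ℕ, ∃ (u : ℕ → U) (tend : ℕ), tend ≤ m * (Td + 1) ∧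
      ∀ i < m, ∃ j < tend, (traj f x0 u j, u j) = a i := by
  intro m
  induction m with
  | zero => exact ⟨fun _ => Classical.arbitrary U, 0, by simp, fun i hi => absurd hi (by omega)⟩
  | succ m ih =>
    obtain ⟨u, tend, htend, hvis⟩ := ih
    obtain ⟨T, hT1, hTd, v, hv⟩ := hctrl (traj f x0 u tend) (a m).1
    set u' : ℕ → U := fun k =>
      if k < tend then u k else if k < tend + T then v (k - tend) else (a m).2 with hu'
    have hagree : ∀ k < tend, u k = u' k := by
      intro k hk; simp [hu', hk]
    have htraj_tend : traj f x0 u' tend = traj f x0 u tend :=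
      (traj_congr f x0 hagree).symm
    have hstate : traj f x0 u' (tend + T) = (a m).1 := by
      rw [traj_add f x0 u' tend T, htraj_tend]
      rw [← hv]
      apply traj_congr
      intro k hk
      simp only [hu']
      rw [if_neg (by omega), if_pos (by omega)]
      congr 1
      omega
    have hinput : u' (tend + T) = (a m).2 := by
      simp only [hu']
      rw [if_neg (by omega), if_neg (by omega)]
    refine ⟨u', tend + T + 1, by rw [Nat.succ_mul]; omega, ?_⟩
    intro i hi
    rcases Nat.lt_succ_iff_lt_or_eq.mp hi with hi' | rfl
    · obtain ⟨j, hj, hje⟩ := hvis i hi'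
      refine ⟨j, by omega, ?_⟩
      rw [← hje, (hagree j hj).symm, traj_congr f x0 (fun k hk => hagree k (by omega))]
    · exact ⟨tend + T, by omega, by rw [hstate, hinput]⟩

/-- For a `Td`-controllable system, anchors with fill distance at most `ε`
w.r.t. a nonempty compact region of interest, a strictly positive definite kernel, and
`N ≥ M·(Td+1)`: any input sequence minimizing the average GP posterior variance at the
anchor points yields a dataset containing every anchor point, whose fill distance w.r.t.
the region of interest is at most `ε`. -/
theorem statement0 {X U : Type*} [MetricSpace X] [MetricSpace U] [Nonempty X] [Nonempty U]
    (f : X → U → X) (Td : ℕ) (hTd : 0 < Td) (hctrl : Controllable f Td)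
    (Zt : Set (X × U)) (hZt_ne : Zt.Nonempty) (hZt_cpt : IsCompact Zt)
    {M : ℕ} (hM : 0 < M) (anchors : Fin M → X × U)
    (ε : ℝ) (hε : 0 < ε)
    (hfill : fillDist Zt (Finset.image anchors Finset.univ) ≤ ε)
    (κ : X × U → X × U → ℝ) (hκ : IsStrictlyPDKernel κ)
    (x0 : X) (N : ℕ) (hN : M * (Td + 1) ≤ N)
    (ustar : ℕ → U)
    (hopt : ∀ u : ℕ → U,
      (1 / (M : ℝ)) * ∑ i, postVar κ (dataset f x0 ustar N) (anchors i) ≤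
        (1 / (M : ℝ)) * ∑ i, postVar κ (dataset f x0 u N) (anchors i)) :
    (∀ i, anchors i ∈ dataset f x0 ustar N) ∧
      fillDist Zt (dataset f x0 ustar N) ≤ ε := by
  classical
  -- A "good" input sequence visiting all anchors
  set a : ℕ → X × U := fun i => if h : i < M then anchors ⟨i, h⟩ else anchors ⟨0, hM⟩ with ha
  obtain ⟨uG, tend, htend, hvis⟩ := exists_visiting f Td hctrl x0 a M
  have hgood : ∀ i : Fin M, anchors i ∈ dataset f x0 uG N := by
    intro i
    obtain ⟨j, hj, hje⟩ := hvis i i.2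
    have hjN : j < N := lt_of_lt_of_le hj (le_trans htend hN)
    rw [dataset, Finset.mem_image]
    refine ⟨j, Finset.mem_range.mpr hjN, ?_⟩
    rw [hje]
    simp [ha, i.2]
  -- The optimal dataset contains all anchors
  set Sstar := dataset f x0 ustar N with hSstar
  have hMpos : (0:ℝ) < M := Nat.cast_pos.mpr hM
  have hc : (0:ℝ) < 1 / M := by positivity
  have hsum_le : ∑ i, postVar κ Sstar (anchors i) ≤ 0 := by
    have h1 := hopt uG
    have h2 : ∑ i, postVar κ (dataset f x0 uG N) (anchors i) = 0 :=
      Finset.sum_eq_zero fun i _ => postVar_eq_zero_of_mem hκ (hgood i)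
    rw [h2, mul_zero] at h1
    exact le_of_mul_le_mul_left (by rw [mul_zero]; exact h1) hc
  have hnn : ∀ i ∈ Finset.univ, (0:ℝ) ≤ postVar κ Sstar (anchors i) := by
    intro i _
    by_cases hmem : anchors i ∈ Sstar
    · exact le_of_eq (postVar_eq_zero_of_mem hκ hmem).symm
    · exact (postVar_pos_of_not_mem hκ hmem).le
  have hzero := (Finset.sum_eq_zero_iff_of_nonneg hnn).mp
    (le_antisymm hsum_le (Finset.sum_nonneg hnn))
  have hmem : ∀ i, anchors i ∈ Sstar := by
    intro i
    by_contra hno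
    exact (postVar_pos_of_not_mem hκ hno).ne' (hzero i (Finset.mem_univ i))
  refine ⟨hmem, ?_⟩
  -- Fill distance bound
  haveI : Nonempty Zt := hZt_ne.to_subtype
  have hA0 : anchors ⟨0, hM⟩ ∈ Finset.image anchors Finset.univ :=
    Finset.mem_image_of_mem _ (Finset.mem_univ _)
  obtain ⟨ς₀, hς₀⟩ := hZt_ne
  obtain ⟨r, hr⟩ := hZt_cpt.isBounded.subset_closedBall ς₀
  set B : Zt → ℝ :=
    fun ς => ⨅ z : (Finset.image anchors Finset.univ), dist (ς : X × U) (z : X × U) with hB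
  have hbdd : ∀ (ς : Zt) (D : Finset (X × U)),
      BddBelow (Set.range fun z : D => dist (ς : X × U) (z : X × U)) := by
    intro ς D
    exact ⟨0, by rintro _ ⟨z, rfl⟩; exact dist_nonneg⟩
  have hbddB : BddAbove (Set.range B) := by
    refine ⟨r + dist ς₀ (anchors ⟨0, hM⟩), ?_⟩
    rintro _ ⟨ς, rfl⟩
    have h1 : B ς ≤ dist (ς : X × U) (anchors ⟨0, hM⟩) :=
      ciInf_le (hbdd ς _) (⟨_, hA0⟩ : (Finset.image anchors Finset.univ : Finset (X × U)))
    have h2 := dist_triangle (ς : X × U) ς₀ (anchors ⟨0, hM⟩)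
    have h3 : dist (ς : X × U) ς₀ ≤ r := by
      have := hr ς.2
      simpa [Metric.mem_closedBall] using this
    linarith
  rw [fillDist]
  apply ciSup_le
  intro ς
  have hAB : (⨅ z : Sstar, dist (ς : X × U) (z : X × U)) ≤ B ς := by
    haveI : Nonempty (Finset.image anchors Finset.univ : Finset (X × U)) := ⟨⟨_, hA0⟩⟩
    apply le_ciInf
    intro z
    have hz : (z : X × U) ∈ Sstar := by
      obtain ⟨i, _, hi⟩ := Finset.mem_image.mp z.2
      rw [← hi]
      exact hmem i
    exact ciInf_le (hbdd ς _) (⟨(z : X × U), hz⟩ : Sstar)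
  have hBε : B ς ≤ ε := le_trans (le_ciSup hbddB ς) hfill
  exact le_trans hAB hBε
end

section
/- Let Z be a metric space, let Z̃ ⊆ Z be a nonempty compact region of interest, and let D_I = {z̃_1, …, z̃_M} ⊆ Z be a finite anchor set whose fill distance with respect to Z̃ is at most ε > 0. Let κ be a strictly positive definite kernel on Z and let S be a finite nonempty set of pairwise-distinct points of Z. If the space-filling cost V(S) = (1/M)·Σ_{i=1}^{M} Var(z̃_i ; S) equals 0, then every anchor point z̃_i belongs to S and the fill distance of S with respect to Z̃ is at most ε (i.e., S has the ε-space-filling property with respect to Z̃). -/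
open Matrix
open scoped Classical

lemma posDef_submatrix_equiv' {m n : Type*} [Fintype m] [Fintype n]
    {M : Matrix n n ℝ} (hM : M.PosDef) (e : m ≃ n) : (M.submatrix e e).PosDef := by
  refine Matrix.PosDef.of_dotProduct_mulVec_pos ((Matrix.isHermitian_submatrix_equiv e).mpr hM.1) fun x hx => ?_
  have hx' : x ∘ e.symm ≠ 0 := by
    intro h0
    apply hx
    funext i
    simpa using congrFun h0 (e i)
  have h := hM.dotProduct_mulVec_pos hx'
  rw [Matrix.submatrix_mulVec_equiv]
  convert h using 1
  simp only [dotProduct, Pi.star_apply, Function.comp_apply]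
  exact Fintype.sum_equiv e _ _ (fun i => by simp)

lemma postVar_nonneg {Z : Type*} {κ : Z → Z → ℝ} (hκ : IsStrictlyPDKernel κ)
    (S : Finset Z) (zq : Z) : 0 ≤ postVar κ S zq := by
  by_cases h : zq ∈ S
  · exact (postVar_eq_zero_of_mem hκ h).ge
  · exact (postVar_pos_of_not_mem hκ h).le

/-- If the space-filling cost `V(S) = (1/M)·Σᵢ Var(z̃ᵢ ; S)` of a finite
nonempty set `S` vanishes, where the anchors have fill distance at most `ε` w.r.t. the
nonempty compact region of interest, then every anchor point belongs to `S` and `S` has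
the `ε`-space-filling property w.r.t. the region of interest. -/
theorem statement1 {Z : Type*} [MetricSpace Z]
    (Zt : Set Z) (hZt_ne : Zt.Nonempty) (hZt_cpt : IsCompact Zt)
    {M : ℕ} (hM : 0 < M) (anchors : Fin M → Z)
    (ε : ℝ) (hε : 0 < ε)
    (hfill : fillDist Zt (Finset.image anchors Finset.univ) ≤ ε)
    (κ : Z → Z → ℝ) (hκ : IsStrictlyPDKernel κ)
    (S : Finset Z) (hS : S.Nonempty)
    (hcost : (1 / (M : ℝ)) * ∑ i, postVar κ S (anchors i) = 0) :
    (∀ i, anchors i ∈ S) ∧ fillDist Zt S ≤ ε := by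
  have hMne : (M : ℝ) ≠ 0 := Nat.cast_ne_zero.mpr hM.ne'
  have hsum : ∑ i, postVar κ S (anchors i) = 0 := by
    rcases mul_eq_zero.mp hcost with h | h
    · exact absurd h (one_div_ne_zero hMne)
    · exact h
  have hzero : ∀ i : Fin M, postVar κ S (anchors i) = 0 := fun i =>
    (Finset.sum_eq_zero_iff_of_nonneg fun j _ => postVar_nonneg hκ S (anchors j)).mp hsum i
      (Finset.mem_univ i)
  have hmem : ∀ i, anchors i ∈ S := by
    intro i
    by_contra hni
    exact absurd (hzero i) (postVar_pos_of_not_mem hκ hni).ne'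
  refine ⟨hmem, ?_⟩
  haveI : Nonempty Zt := hZt_ne.to_subtype
  set D0 : Finset Z := Finset.image anchors Finset.univ with hD0
  have ha0 : anchors ⟨0, hM⟩ ∈ D0 := Finset.mem_image_of_mem _ (Finset.mem_univ _)
  obtain ⟨ς₀, hς₀⟩ := hZt_ne
  obtain ⟨C, hC⟩ := Metric.isBounded_iff.mp hZt_cpt.isBounded
  have hbdd : BddAbove (Set.range fun ς : Zt => ⨅ z : D0, dist (ς : Z) (z : Z)) := by
    refine ⟨C + dist ς₀ (anchors ⟨0, hM⟩), ?_⟩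
    rintro _ ⟨ς, rfl⟩
    have h1 : (⨅ z : D0, dist (ς : Z) (z : Z)) ≤ dist (ς : Z) (anchors ⟨0, hM⟩) :=
      ciInf_le ⟨0, by rintro _ ⟨z, rfl⟩; exact dist_nonneg⟩ (⟨_, ha0⟩ : D0)
    refine h1.trans ((dist_triangle (ς : Z) ς₀ _).trans ?_)
    exact add_le_add_left (hC ς.2 hς₀) _
  haveI : Nonempty {x // x ∈ D0} := ⟨⟨_, ha0⟩⟩
  rw [fillDist]
  refine ciSup_le fun ς => ?_
  have hstep1 : (⨅ z : S, dist (ς : Z) (z : Z)) ≤ ⨅ z : D0, dist (ς : Z) (z : Z) := by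
    refine le_ciInf fun z => ?_
    have hzS : (z : Z) ∈ S := by
      obtain ⟨i, _, hi⟩ := Finset.mem_image.mp z.2
      exact hi ▸ hmem i
    exact ciInf_le ⟨0, by rintro _ ⟨w, rfl⟩; exact dist_nonneg⟩ (⟨(z : Z), hzS⟩ : S)
  have hstep2 : (⨅ z : D0, dist (ς : Z) (z : Z)) ≤ fillDist Zt D0 := le_ciSup hbdd ς
  exact hstep1.trans (hstep2.trans hfill)
end
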